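/- arXiv:0910.1013 — 3 statements merged into one kernel-verified Lean document; each statement's English description precedes it below -/
import Mathlib

section
/- There is a bijection between symmetric positive semidefinite kernels K : X × X → ℝ and reproducing kernel Hilbert spaces of real functions on X: every RKHS has a unique reproducing kernel, which is positive semidefinite, and every positive semidefinite kernel is the reproducing kernel of a unique RKHS. -/
open scoped BigOperators

/-- A reproducing kernel Hilbert space on `X` with kernel `K`: an abstract
Hilbert space `H` together with an injective linear map `e` into the pointwise
defined functions on `X`, such that every evaluation functional is represented
(hence continuous) by an element `kx` with `e kx = K x ·`. -/
structure RKHSOn (X : Type) (K : X → X → ℝ) where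
  H : Type
  [grp : NormedAddCommGroup H]
  [ip : InnerProductSpace ℝ H]
  [comp : CompleteSpace H]
  e : H →ₗ[ℝ] X → ℝ
  inj : Function.Injective e
  repr : ∀ x : X, ∃ kx : H, e kx = K x ∧ ∀ f : H, e f x = inner ℝ kx f

attribute [instance] RKHSOn.grp RKHSOn.ip RKHSOn.comp

section Aux

variable {X : Type}

/-- The linear map sending finitely supported coefficients to the corresponding
combination of kernel functions. -/
noncomputable def kerT (K : X → X → ℝ) : (X →₀ ℝ) →ₗ[ℝ] X → ℝ :=
  Finsupp.linearCombination ℝ K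

lemma kerT_apply (K : X → X → ℝ) (α : X →₀ ℝ) (y : X) :
    kerT K α y = α.sum fun x a => a * K x y := by
  simp [kerT, Finsupp.linearCombination_apply, Finsupp.sum, Finset.sum_apply]

/-- Bilinear form associated to a kernel. -/
noncomputable def kerB (K : X → X → ℝ) (α β : X →₀ ℝ) : ℝ :=
  β.sum fun y b => b * kerT K α y

lemma kerB_single (K : X → X → ℝ) (α : X →₀ ℝ) (y : X) :
    kerB K α (Finsupp.single y 1) = kerT K α y := by
  rw [kerB, Finsupp.sum_single_index (by ring), one_mul]

lemma kerB_eq (K : X → X → ℝ) (α β : X →₀ ℝ) :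
    kerB K α β = ∑ y ∈ β.support, ∑ x ∈ α.support, β y * (α x * K x y) := by
  simp only [kerB, kerT_apply, Finsupp.sum, Finset.mul_sum]

lemma kerB_symm {K : X → X → ℝ} (hsymm : ∀ x y, K x y = K y x) (α β : X →₀ ℝ) :
    kerB K α β = kerB K β α := by
  rw [kerB_eq, kerB_eq, Finset.sum_comm]
  refine Finset.sum_congr rfl fun x _ => Finset.sum_congr rfl fun y _ => ?_
  rw [hsymm x y]; ring

lemma kerB_nonneg {K : X → X → ℝ}
    (hpsd : ∀ (n : ℕ) (x : Fin n → X) (α : Fin n → ℝ),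
      0 ≤ ∑ i, ∑ j, α i * α j * K (x i) (x j)) (α : X →₀ ℝ) :
    0 ≤ kerB K α α := by
  classical
  set s := α.support with hs
  have key : ∀ G : X → ℝ, ∑ x ∈ s, G x = ∑ i : Fin s.card, G (s.equivFin.symm i : X) := by
    intro G
    rw [← Finset.sum_coe_sort s G, ← Equiv.sum_comp s.equivFin.symm (fun x : s => G (x : X))]
  have h := hpsd s.card (fun i => (s.equivFin.symm i : X)) (fun i => α ((s.equivFin.symm i : X)))
  rw [kerB_eq]
  calc (0:ℝ) ≤ ∑ i, ∑ j, α (s.equivFin.symm i : X) * α (s.equivFin.symm j : X) *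
        K (s.equivFin.symm i : X) (s.equivFin.symm j : X) := h
    _ = ∑ a ∈ s, ∑ b ∈ s, α a * α b * K a b := by
        rw [key (fun a => ∑ b ∈ s, α a * α b * K a b)]
        refine Finset.sum_congr rfl fun i _ => ?_
        exact (key (fun b => α (s.equivFin.symm i : X) * α b * K (s.equivFin.symm i : X) b)).symm
    _ = ∑ y ∈ s, ∑ x ∈ s, α y * (α x * K x y) := by
        rw [Finset.sum_comm]
        exact Finset.sum_congr rfl fun a _ => Finset.sum_congr rfl fun b _ => by ring

lemma kerB_add_left {K : X → X → ℝ} (α α' β : X →₀ ℝ) :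
    kerB K (α + α') β = kerB K α β + kerB K α' β := by
  simp only [kerB, map_add, Pi.add_apply, mul_add, Finsupp.sum, Finset.sum_add_distrib]

lemma kerB_smul_left {K : X → X → ℝ} (r : ℝ) (α β : X →₀ ℝ) :
    kerB K (r • α) β = r * kerB K α β := by
  simp only [kerB, map_smul, Pi.smul_apply, smul_eq_mul, Finsupp.sum, Finset.mul_sum]
  exact Finset.sum_congr rfl fun y _ => by ring

lemma kerB_sq_le {K : X → X → ℝ} (hsymm : ∀ x y, K x y = K y x)
    (hpsd : ∀ (n : ℕ) (x : Fin n → X) (α : Fin n → ℝ),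
      0 ≤ ∑ i, ∑ j, α i * α j * K (x i) (x j)) (α β : X →₀ ℝ) :
    kerB K α β * kerB K α β ≤ kerB K α α * kerB K β β := by
  have h : ∀ t : ℝ, 0 ≤ kerB K β β * (t * t) + (2 * kerB K α β) * t + kerB K α α := by
    intro t
    have h0 := kerB_nonneg hpsd (α + t • β)
    have e1 : kerB K (α + t • β) (α + t • β)
        = kerB K α α + t * kerB K α β + t * kerB K β α + t * (t * kerB K β β) := by
      rw [kerB_symm hsymm (α + t • β) (α + t • β)]
      rw [kerB_add_left, kerB_smul_left,
        kerB_symm hsymm α (α + t • β), kerB_add_left, kerB_smul_left,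
        kerB_symm hsymm β (α + t • β), kerB_add_left, kerB_smul_left,
        kerB_symm hsymm α β]
      ring
    rw [e1] at h0
    have hba : kerB K β α = kerB K α β := kerB_symm hsymm β α
    rw [hba] at h0
    nlinarith [h0]
  have hd := discrim_le_zero h
  rw [discrim] at hd
  nlinarith [hd]

lemma kerB_null {K : X → X → ℝ} (hsymm : ∀ x y, K x y = K y x)
    (hpsd : ∀ (n : ℕ) (x : Fin n → X) (α : Fin n → ℝ),
      0 ≤ ∑ i, ∑ j, α i * α j * K (x i) (x j)) {α : X →₀ ℝ}
    (h : kerB K α α = 0) : kerT K α = 0 := by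
  classical
  funext y
  have h1 := kerB_sq_le hsymm hpsd α (Finsupp.single y 1)
  rw [h, zero_mul] at h1
  have h2 : kerB K α (Finsupp.single y 1) = 0 := by nlinarith [h1]
  rw [← kerB_single K α y, h2]; rfl

/-- Realization-compatible norm-preserving map between two RKHS with the same kernel. -/
lemma rkhs_exists_map {K : X → X → ℝ} (R₁ R₂ : RKHSOn X K) :
    ∃ Φ : R₁.H →L[ℝ] R₂.H, (∀ f, ‖Φ f‖ = ‖f‖) ∧ ∀ f, R₂.e (Φ f) = R₁.e f := by
  classical
  obtain ⟨k₁, hk₁, hk₁'⟩ : ∃ k : X → R₁.H,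
      (∀ x, R₁.e (k x) = K x) ∧ ∀ (x) (f : R₁.H), R₁.e f x = inner ℝ (k x) f := by
    choose k h1 h2 using R₁.repr; exact ⟨k, h1, h2⟩
  obtain ⟨k₂, hk₂, hk₂'⟩ : ∃ k : X → R₂.H,
      (∀ x, R₂.e (k x) = K x) ∧ ∀ (x) (f : R₂.H), R₂.e f x = inner ℝ (k x) f := by
    choose k h1 h2 using R₂.repr; exact ⟨k, h1, h2⟩
  set u₁ : (X →₀ ℝ) →ₗ[ℝ] R₁.H := Finsupp.linearCombination ℝ k₁ with hu₁
  set u₂ : (X →₀ ℝ) →ₗ[ℝ] R₂.H := Finsupp.linearCombination ℝ k₂ with hu₂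
  -- realization of combinations
  have he₁ : ∀ (α : X →₀ ℝ) (y : X), R₁.e (u₁ α) y = α.sum fun x a => a * K x y := by
    intro α y
    rw [hu₁, Finsupp.linearCombination_apply, map_finsuppSum]
    simp only [Finsupp.sum, Finset.sum_apply]
    exact Finset.sum_congr rfl fun x _ => by rw [map_smul, Pi.smul_apply, hk₁, smul_eq_mul]
  have he₂ : ∀ (α : X →₀ ℝ) (y : X), R₂.e (u₂ α) y = α.sum fun x a => a * K x y := by
    intro α y
    rw [hu₂, Finsupp.linearCombination_apply, map_finsuppSum]
    simp only [Finsupp.sum, Finset.sum_apply]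
    exact Finset.sum_congr rfl fun x _ => by rw [map_smul, Pi.smul_apply, hk₂, smul_eq_mul]
  -- inner products of combinations
  have hi₁ : ∀ (α : X →₀ ℝ) (f : R₁.H),
      (inner ℝ (u₁ α) f : ℝ) = α.sum fun x a => a * R₁.e f x := by
    intro α f
    rw [hu₁, Finsupp.linearCombination_apply, Finsupp.sum, sum_inner, Finsupp.sum]
    exact Finset.sum_congr rfl fun x _ => by rw [real_inner_smul_left, hk₁']
  have hi₂ : ∀ (α : X →₀ ℝ) (f : R₂.H),
      (inner ℝ (u₂ α) f : ℝ) = α.sum fun x a => a * R₂.e f x := by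
    intro α f
    rw [hu₂, Finsupp.linearCombination_apply, Finsupp.sum, sum_inner, Finsupp.sum]
    exact Finset.sum_congr rfl fun x _ => by rw [real_inner_smul_left, hk₂']
  -- equality of norms
  have hnorm : ∀ α : X →₀ ℝ, ‖u₁ α‖ = ‖u₂ α‖ := by
    intro α
    have h1 : (inner ℝ (u₁ α) (u₁ α) : ℝ) = α.sum fun x a => a * (α.sum fun z b => b * K z x) := by
      rw [hi₁]; exact Finsupp.sum_congr fun x _ => by rw [he₁]
    have h2 : (inner ℝ (u₂ α) (u₂ α) : ℝ) = α.sum fun x a => a * (α.sum fun z b => b * K z x) := by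
      rw [hi₂]; exact Finsupp.sum_congr fun x _ => by rw [he₂]
    have : ‖u₁ α‖ * ‖u₁ α‖ = ‖u₂ α‖ * ‖u₂ α‖ := by
      rw [← real_inner_self_eq_norm_mul_norm, ← real_inner_self_eq_norm_mul_norm, h1, h2]
    nlinarith [norm_nonneg (u₁ α), norm_nonneg (u₂ α), this]
  -- kernel inclusion
  have hker : LinearMap.ker u₁ ≤ LinearMap.ker u₂ := by
    intro α hα
    rw [LinearMap.mem_ker] at hα ⊢
    have := hnorm α
    rw [hα, norm_zero] at this
    exact norm_eq_zero.mp this.symm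
  set φ₀ : ↥(LinearMap.range u₁) →ₗ[ℝ] R₂.H :=
    (Submodule.liftQ (LinearMap.ker u₁) u₂ hker).comp
      (LinearMap.quotKerEquivRange u₁).symm.toLinearMap with hφ₀def
  have hφ₀ : ∀ α : X →₀ ℝ, φ₀ ⟨u₁ α, LinearMap.mem_range_self _ _⟩ = u₂ α := by
    intro α
    have h1 : (LinearMap.quotKerEquivRange u₁).symm ⟨u₁ α, LinearMap.mem_range_self _ _⟩
        = Submodule.Quotient.mk α := by
      rw [LinearEquiv.symm_apply_eq]
      exact Subtype.ext (LinearMap.quotKerEquivRange_apply_mk u₁ α)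
    rw [hφ₀def, LinearMap.comp_apply, LinearEquiv.coe_toLinearMap, h1, Submodule.liftQ_apply]
  have hφ₀norm : ∀ s : ↥(LinearMap.range u₁), ‖φ₀ s‖ = ‖s‖ := by
    rintro ⟨f, hf⟩
    obtain ⟨α, rfl⟩ := LinearMap.mem_range.mp hf
    rw [hφ₀ α, Submodule.coe_norm, ← hnorm α]
  set φLI : ↥(LinearMap.range u₁) →ₗᵢ[ℝ] R₂.H := ⟨φ₀, hφ₀norm⟩ with hφLI
  -- density of the range of u₁
  have hdense : Dense ((LinearMap.range u₁ : Submodule ℝ R₁.H) : Set R₁.H) := by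
    have htop : (LinearMap.range u₁).topologicalClosure = ⊤ := by
      rw [Submodule.topologicalClosure_eq_top_iff, Submodule.eq_bot_iff]
      intro f hf
      apply R₁.inj
      rw [map_zero]
      funext x
      have hmem : k₁ x ∈ LinearMap.range u₁ := by
        refine ⟨Finsupp.single x 1, ?_⟩
        rw [hu₁, Finsupp.linearCombination_single, one_smul]
      have h0 : (inner ℝ (k₁ x) f : ℝ) = 0 := hf (k₁ x) hmem
      rw [Pi.zero_apply, hk₁' x f, h0]
    have := congrArg (fun (s : Submodule ℝ R₁.H) => (s : Set R₁.H)) htop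
    simp only [Submodule.topologicalClosure_coe, Submodule.top_coe] at this
    rw [dense_iff_closure_eq, this]
  have hd : DenseRange ((LinearMap.range u₁).subtypeL : ↥(LinearMap.range u₁) →L[ℝ] R₁.H) := by
    have : Set.range ((LinearMap.range u₁).subtypeL : ↥(LinearMap.range u₁) →L[ℝ] R₁.H)
        = ((LinearMap.range u₁ : Submodule ℝ R₁.H) : Set R₁.H) := Subtype.range_coe
    rw [DenseRange, this]
    exact hdense
  have hui : IsUniformInducing ((LinearMap.range u₁).subtypeL : ↥(LinearMap.range u₁) →L[ℝ] R₁.H) :=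
    (LinearMap.range u₁).subtypeₗᵢ.isometry.isUniformInducing
  set Φ : R₁.H →L[ℝ] R₂.H :=
    ContinuousLinearMap.extend φLI.toContinuousLinearMap
      ((LinearMap.range u₁).subtypeL) with hΦdef
  have hΦs : ∀ s : ↥(LinearMap.range u₁), Φ s = φ₀ s := by
    intro s
    have := ContinuousLinearMap.extend_eq (f := φLI.toContinuousLinearMap)
      (e := (LinearMap.range u₁).subtypeL) hd hui s
    exact this
  have hΦu : ∀ α : X →₀ ℝ, Φ (u₁ α) = u₂ α := by
    intro α
    have := hΦs ⟨u₁ α, LinearMap.mem_range_self _ _⟩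
    rw [hφ₀ α] at this
    exact this
  -- norm preservation on all of R₁.H by density
  have hΦnorm : ∀ f : R₁.H, ‖Φ f‖ = ‖f‖ := by
    have : (fun f : R₁.H => ‖Φ f‖) = fun f => ‖f‖ := by
      refine Continuous.ext_on hdense (Φ.continuous.norm) continuous_norm ?_
      intro f hf
      have := hΦs ⟨f, hf⟩
      simp only
      rw [this, hφ₀norm ⟨f, hf⟩, Submodule.coe_norm]
    exact fun f => congrFun this f
  -- realization compatibility by density
  have hΦe : ∀ (x : X), (fun f : R₁.H => R₂.e (Φ f) x) = fun f => R₁.e f x := by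
    intro x
    have hc1 : Continuous fun f : R₁.H => R₂.e (Φ f) x := by
      simp only [hk₂' x]
      exact Continuous.inner continuous_const Φ.continuous
    have hc2 : Continuous fun f : R₁.H => R₁.e f x := by
      simp only [hk₁' x]
      exact Continuous.inner continuous_const continuous_id
    refine Continuous.ext_on hdense hc1 hc2 ?_
    intro f hf
    obtain ⟨α, rfl⟩ := LinearMap.mem_range.mp hf
    simp only
    rw [hΦu α, he₂, he₁]
  exact ⟨Φ, hΦnorm, fun f => funext fun x => congrFun (hΦe x) f⟩

/-- The pre-Hilbert space: the range of `kerT K` inside `X → ℝ`, wrapped in a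
type synonym so that no ambient instances on the subtype interfere. -/
noncomputable def rkhsS (K : X → X → ℝ) : Submodule ℝ (X → ℝ) := LinearMap.range (kerT K)

def rkhsH0 (K : X → X → ℝ) : Type := ↥(rkhsS K)

noncomputable instance (K : X → X → ℝ) : AddCommGroup (rkhsH0 K) :=
  inferInstanceAs (AddCommGroup ↥(rkhsS K))

noncomputable instance (K : X → X → ℝ) : Module ℝ (rkhsH0 K) :=
  inferInstanceAs (Module ℝ ↥(rkhsS K))

/-- The underlying function of an element of the pre-Hilbert space. -/
def rkhsFn {K : X → X → ℝ} (f : rkhsH0 K) : X → ℝ := (f : ↥(rkhsS K)).1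

lemma rkhsFn_add {K : X → X → ℝ} (f g : rkhsH0 K) : rkhsFn (f + g) = rkhsFn f + rkhsFn g := rfl

lemma rkhsFn_smul {K : X → X → ℝ} (r : ℝ) (f : rkhsH0 K) : rkhsFn (r • f) = r • rkhsFn f := rfl

lemma rkhsFn_injective {K : X → X → ℝ} : Function.Injective (rkhsFn (K := K)) := by
  intro f g h
  exact Subtype.ext h

/-- Build an element of the pre-Hilbert space from coefficients. -/
noncomputable def rkhsMk (K : X → X → ℝ) (α : X →₀ ℝ) : rkhsH0 K :=
  (⟨kerT K α, LinearMap.mem_range_self _ α⟩ : ↥(rkhsS K))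

lemma rkhsFn_mk (K : X → X → ℝ) (α : X →₀ ℝ) : rkhsFn (rkhsMk K α) = kerT K α := rfl

lemma rkhsMk_zero (K : X → X → ℝ) : rkhsMk K 0 = 0 :=
  rkhsFn_injective (by rw [rkhsFn_mk, map_zero]; rfl)

lemma rkhsMk_add (K : X → X → ℝ) (α β : X →₀ ℝ) :
    rkhsMk K (α + β) = rkhsMk K α + rkhsMk K β :=
  rkhsFn_injective (by rw [rkhsFn_mk, map_add, rkhsFn_add, rkhsFn_mk, rkhsFn_mk])

lemma rkhsMk_smul (K : X → X → ℝ) (r : ℝ) (α : X →₀ ℝ) :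
    rkhsMk K (r • α) = r • rkhsMk K α :=
  rkhsFn_injective (by rw [rkhsFn_mk, map_smul, rkhsFn_smul, rkhsFn_mk])

lemma rkhsMk_single (K : X → X → ℝ) (x : X) : rkhsFn (rkhsMk K (Finsupp.single x 1)) = K x := by
  rw [rkhsFn_mk, kerT, Finsupp.linearCombination_single, one_smul]

/-- Existence: every symmetric positive semidefinite kernel admits a RKHS. -/
lemma rkhs_exists (K : X → X → ℝ) (hsymm : ∀ x y, K x y = K y x)
    (hpsd : ∀ (n : ℕ) (x : Fin n → X) (α : Fin n → ℝ),
      0 ≤ ∑ i, ∑ j, α i * α j * K (x i) (x j)) :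
    Nonempty (RKHSOn X K) := by
  classical
  choose pre hpre using fun f : rkhsH0 K => LinearMap.mem_range.mp (f : ↥(rkhsS K)).2
  have hBform : ∀ (f : rkhsH0 K) (β : X →₀ ℝ),
      kerB K (pre f) β = β.sum fun y b => b * rkhsFn f y := by
    intro f β
    rw [kerB, hpre]
    rfl
  letI core : InnerProductSpace.Core ℝ (rkhsH0 K) :=
    { inner := fun f g => (pre g).sum fun y b => b * rkhsFn f y
      conj_inner_symm := by
        intro f g
        show starRingEnd ℝ ((pre f).sum fun y b => b * rkhsFn g y)
          = (pre g).sum fun y b => b * rkhsFn f y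
        rw [starRingEnd_apply, star_trivial, ← hBform g (pre f), ← hBform f (pre g),
          kerB_symm hsymm]
      re_inner_nonneg := by
        intro f
        have h := kerB_nonneg hpsd (pre f)
        rw [hBform f (pre f)] at h
        exact h
      add_left := by
        intro f f' g
        show ((pre g).sum fun y b => b * (rkhsFn f y + rkhsFn f' y))
          = ((pre g).sum fun y b => b * rkhsFn f y)
            + (pre g).sum fun y b => b * rkhsFn f' y
        simp only [mul_add, Finsupp.sum, Finset.sum_add_distrib]
      smul_left := by
        intro f g r
        show ((pre g).sum fun y b => b * (r * rkhsFn f y))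
          = (starRingEnd ℝ) r * (pre g).sum fun y b => b * rkhsFn f y
        rw [starRingEnd_apply, star_trivial]
        simp only [Finsupp.sum, Finset.mul_sum]
        exact Finset.sum_congr rfl fun y _ => by ring
      definite := by
        intro f hf
        have h3 : kerB K (pre f) (pre f) = 0 := (hBform f (pre f)).trans hf
        have h4 := kerB_null hsymm hpsd h3
        rw [hpre f] at h4
        exact rkhsFn_injective h4 }
  letI : NormedAddCommGroup (rkhsH0 K) := core.toNormedAddCommGroup
  letI : InnerProductSpace ℝ (rkhsH0 K) := InnerProductSpace.ofCore core.toCore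
  -- kernel elements
  set k0 : X → rkhsH0 K := fun x => rkhsMk K (Finsupp.single x 1) with hk0
  have hfn_k0 : ∀ x : X, rkhsFn (k0 x) = K x := fun x => rkhsMk_single K x
  have inner_k0 : ∀ (x : X) (f : rkhsH0 K), (inner ℝ (k0 x) f : ℝ) = rkhsFn f x := by
    intro x f
    show ((pre f).sum fun y b => b * rkhsFn (k0 x) y) = rkhsFn f x
    have h1 : ((pre f).sum fun y b => b * rkhsFn (k0 x) y)
        = (pre f).sum fun y b => b * K y x := by
      refine Finsupp.sum_congr fun y _ => ?_
      rw [hfn_k0, hsymm x y]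
    rw [h1]
    have h2 : kerT K (pre f) x = (pre f).sum fun y b => b * K y x := by
      rw [kerT_apply]
    rw [← h2]
    have := congrFun (hpre f) x
    exact this
  -- the Hilbert space: completion of the pre-Hilbert space
  set e : UniformSpace.Completion (rkhsH0 K) →ₗ[ℝ] X → ℝ :=
    { toFun := fun f x => (inner ℝ ((k0 x : rkhsH0 K) : UniformSpace.Completion (rkhsH0 K)) f : ℝ)
      map_add' := fun f g => funext fun x => inner_add_right _ _ _
      map_smul' := fun r f => funext fun x => by
        simp only [RingHom.id_apply, Pi.smul_apply, smul_eq_mul]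
        exact real_inner_smul_right _ _ _ } with he
  have he_apply : ∀ (f : UniformSpace.Completion (rkhsH0 K)) (x : X),
      e f x = (inner ℝ ((k0 x : rkhsH0 K) : UniformSpace.Completion (rkhsH0 K)) f : ℝ) :=
    fun f x => rfl
  have hcoe : ∀ x y : X, e ((k0 x : rkhsH0 K) : UniformSpace.Completion (rkhsH0 K)) y = K x y := by
    intro x y
    rw [he_apply, UniformSpace.Completion.inner_coe, inner_k0, hfn_k0]
  have hrepr : ∀ x : X, ∃ kx : UniformSpace.Completion (rkhsH0 K),
      e kx = K x ∧ ∀ f : UniformSpace.Completion (rkhsH0 K), e f x = inner ℝ kx f := by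
    intro x
    exact ⟨((k0 x : rkhsH0 K) : UniformSpace.Completion (rkhsH0 K)),
      funext fun y => hcoe x y, fun f => rfl⟩
  have hker0 : ∀ f : UniformSpace.Completion (rkhsH0 K), e f = 0 → f = 0 := by
    intro f hf
    have hfx : ∀ x : X,
        (inner ℝ ((k0 x : rkhsH0 K) : UniformSpace.Completion (rkhsH0 K)) f : ℝ) = 0 := by
      intro x
      have := congrFun hf x
      rwa [he_apply] at this
    have hP : ∀ α : X →₀ ℝ,
        (inner ℝ ((rkhsMk K α : rkhsH0 K) : UniformSpace.Completion (rkhsH0 K)) f : ℝ) = 0 := by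
      intro α
      induction α using Finsupp.induction_linear with
      | zero =>
        rw [rkhsMk_zero, UniformSpace.Completion.coe_zero, inner_zero_left]
      | add α β ha hb =>
        rw [rkhsMk_add, UniformSpace.Completion.coe_add, inner_add_left, ha, hb, add_zero]
      | single x a =>
        have hs : rkhsMk K (Finsupp.single x a) = a • k0 x := by
          rw [hk0]
          have : Finsupp.single x a = a • Finsupp.single x (1:ℝ) := by
            rw [Finsupp.smul_single, smul_eq_mul, mul_one]
          rw [this, rkhsMk_smul]
        rw [hs, UniformSpace.Completion.coe_smul, real_inner_smul_left, hfx x, mul_zero]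
    have hall : ∀ g : rkhsH0 K, (inner ℝ (↑g : UniformSpace.Completion (rkhsH0 K)) f : ℝ) = 0 := by
      intro g
      have hg : rkhsMk K (pre g) = g := rkhsFn_injective ((rkhsFn_mk K (pre g)).trans (hpre g))
      rw [← hg]
      exact hP (pre g)
    have hfun : (fun g : UniformSpace.Completion (rkhsH0 K) => (inner ℝ g f : ℝ)) = fun _ => 0 := by
      refine Continuous.ext_on (UniformSpace.Completion.denseRange_coe (α := rkhsH0 K)) ?_
        continuous_const ?_
      · exact Continuous.inner continuous_id continuous_const
      · rintro _ ⟨g, rfl⟩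
        exact hall g
    have : (inner ℝ f f : ℝ) = 0 := congrFun hfun f
    exact inner_self_eq_zero.mp this
  have hinj : Function.Injective e := by
    intro f g h
    rw [← sub_eq_zero]
    apply hker0
    rw [map_sub, h, sub_self]
  exact ⟨RKHSOn.mk (UniformSpace.Completion (rkhsH0 K)) e hinj hrepr⟩

end Aux

/-- Bijection between symmetric positive semidefinite kernels and reproducing
kernel Hilbert spaces: the kernel of a RKHS is unique, symmetric and positive
semidefinite; conversely every symmetric positive semidefinite kernel is the
reproducing kernel of a RKHS which is unique up to an isometric isomorphism
compatible with the realizations as functions on `X`. -/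
theorem stmt_3 {X : Type} :
    (∀ (K : X → X → ℝ) (R : RKHSOn X K),
      -- the kernel of a RKHS is symmetric and positive semidefinite
      ((∀ x y : X, K x y = K y x) ∧
        ∀ (n : ℕ) (x : Fin n → X) (α : Fin n → ℝ),
          0 ≤ ∑ i, ∑ j, α i * α j * K (x i) (x j)) ∧
      -- a given RKHS has a unique reproducing kernel
      (∀ K' : X → X → ℝ,
        (∀ x : X, ∃ kx : R.H, R.e kx = K' x ∧ ∀ f : R.H, R.e f x = inner ℝ kx f) →
        K' = K)) ∧
    -- every symmetric positive semidefinite kernel has a RKHS, unique up to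
    -- an isometric isomorphism commuting with the realization maps
    (∀ K : X → X → ℝ, (∀ x y : X, K x y = K y x) →
      (∀ (n : ℕ) (x : Fin n → X) (α : Fin n → ℝ),
        0 ≤ ∑ i, ∑ j, α i * α j * K (x i) (x j)) →
      Nonempty (RKHSOn X K) ∧
        ∀ R₁ R₂ : RKHSOn X K, ∃ φ : R₁.H ≃ₗᵢ[ℝ] R₂.H, ∀ f : R₁.H, R₂.e (φ f) = R₁.e f) := by
  constructor
  · intro K R
    obtain ⟨k, hk, hk'⟩ : ∃ k : X → R.H,
        (∀ x, R.e (k x) = K x) ∧ ∀ (x) (f : R.H), R.e f x = inner ℝ (k x) f := by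
      choose k h1 h2 using R.repr; exact ⟨k, h1, h2⟩
    have hKi : ∀ x y : X, K x y = (inner ℝ (k y) (k x) : ℝ) := by
      intro x y
      rw [← hk x]
      exact hk' y (k x)
    refine ⟨⟨fun x y => ?_, fun n x α => ?_⟩, fun K' hK' => ?_⟩
    · rw [hKi x y, hKi y x, real_inner_comm]
    · have hv : (0:ℝ) ≤ inner ℝ (∑ j, α j • k (x j)) (∑ j, α j • k (x j)) :=
        real_inner_self_nonneg
      calc (0:ℝ) ≤ inner ℝ (∑ j, α j • k (x j)) (∑ j, α j • k (x j)) := hv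
        _ = ∑ i, ∑ j, α i * α j * K (x i) (x j) := by
            rw [sum_inner]
            refine Finset.sum_congr rfl fun i _ => ?_
            rw [real_inner_smul_left, inner_sum, Finset.mul_sum]
            refine Finset.sum_congr rfl fun j _ => ?_
            rw [real_inner_smul_right, hKi (x i) (x j), real_inner_comm]
            ring
    · obtain ⟨k', hk'1, hk'2⟩ : ∃ k' : X → R.H,
          (∀ x, R.e (k' x) = K' x) ∧ ∀ (x) (f : R.H), R.e f x = inner ℝ (k' x) f := by
        choose k' h1 h2 using hK'; exact ⟨k', h1, h2⟩
      have hkk : ∀ x : X, k' x = k x := by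
        intro x
        have h0 : ∀ f : R.H, (inner ℝ (k' x - k x) f : ℝ) = 0 := by
          intro f
          rw [inner_sub_left]
          have := (hk'2 x f).symm.trans (hk' x f)
          rw [this, sub_self]
        have := h0 (k' x - k x)
        rw [sub_eq_zero.mp (inner_self_eq_zero.mp this)]
      funext x
      rw [← hk'1 x, hkk x, hk x]
  · intro K hsymm hpsd
    refine ⟨rkhs_exists K hsymm hpsd, fun R₁ R₂ => ?_⟩
    obtain ⟨Φ, hΦn, hΦe⟩ := rkhs_exists_map R₁ R₂
    obtain ⟨Ψ, hΨn, hΨe⟩ := rkhs_exists_map R₂ R₁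
    have h1 : ∀ f : R₁.H, Ψ (Φ f) = f := by
      intro f
      apply R₁.inj
      rw [hΨe, hΦe]
    have h2 : ∀ g : R₂.H, Φ (Ψ g) = g := by
      intro g
      apply R₂.inj
      rw [hΦe, hΨe]
    refine ⟨⟨LinearEquiv.ofLinear (Φ : R₁.H →ₗ[ℝ] R₂.H) (Ψ : R₂.H →ₗ[ℝ] R₁.H)
      (LinearMap.ext h2) (LinearMap.ext h1), fun f => hΦn f⟩, fun f => hΦe f⟩
end

section
/- Let (e_i)_{i∈I} be an orthonormal basis of L²(X, μ) with I countable, and let (α_i)_{i∈I} be reals with ∑_i α_i² < ∞. Then K(x,y) = ∑_i α_i² e_i(x) e_i(y) is a positive semidefinite kernel, and the closed unit ball of the associated RKHS equals the Schmidt ellipsoid {f = ∑_i f_i e_i ∈ L² : ∑_i (f_i/α_i)² ≤ 1} (with convention f_i = 0 whenever α_i = 0). -/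
set_option maxHeartbeats 1000000

open scoped BigOperators

open MeasureTheory Filter Topology



open MeasureTheory Filter Topology

theorem aux_ae_eq {X : Type} [MeasurableSpace X] (μ : Measure X)
    {I : Type} [Countable I] (b : HilbertBasis I ℝ (Lp ℝ 2 μ))
    (ε : I → X → ℝ) (hε : ∀ i : I, (b i : Lp ℝ 2 μ) =ᵐ[μ] ε i)
    (c : lp (fun _ : I => ℝ) 2) (f : X → ℝ)
    (hf : ∀ x, HasSum (fun i => c i * ε i x) (f x)) :
    (b.repr.symm c : Lp ℝ 2 μ) =ᵐ[μ] f := by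
  classical
  obtain ⟨u, hu⟩ := (atTop : Filter (Finset I)).exists_seq_tendsto
  set L := b.repr.symm c with hLdef
  have hL : HasSum (fun i => c i • b i) L := b.hasSum_repr_symm c
  set S : ℕ → Lp ℝ 2 μ := fun n => ∑ i ∈ u n, c i • b i with hS
  have hSL : Tendsto S atTop (𝓝 L) := hL.comp hu
  -- coercion of partial sums
  have hScoe : ∀ s : Finset I,
      ((∑ i ∈ s, c i • b i : Lp ℝ 2 μ) : X → ℝ) =ᵐ[μ] fun x => ∑ i ∈ s, c i * ε i x := by
    intro s
    induction s using Finset.induction_on with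
    | empty => simp only [Finset.sum_empty]; exact Lp.coeFn_zero ℝ 2 μ
    | insert _ _ hnotmem ih =>
      rename_i a s
      rw [Finset.sum_insert hnotmem]
      refine (Lp.coeFn_add _ _).trans ?_
      have h2 : ((c a • b a : Lp ℝ 2 μ) : X → ℝ) =ᵐ[μ] fun x => c a * ε a x :=
        (Lp.coeFn_smul _ _).trans ((hε a).mono fun x hx => by
          simp only [Pi.smul_apply, hx, smul_eq_mul])
      filter_upwards [ih, h2] with x hx1 hx2
      simp only [Pi.add_apply, hx1, hx2, Finset.sum_insert hnotmem]
  -- convergence in measure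
  have hmeas : TendstoInMeasure μ (fun n => (S n : X → ℝ)) atTop (L : X → ℝ) := by
    refine tendstoInMeasure_of_tendsto_eLpNorm (p := 2) (by norm_num)
      (fun n => Lp.aestronglyMeasurable _) (Lp.aestronglyMeasurable _) ?_
    have h1 : ∀ n, eLpNorm ((S n : X → ℝ) - (L : X → ℝ)) 2 μ = ENNReal.ofReal ‖S n - L‖ := by
      intro n
      rw [← eLpNorm_congr_ae (Lp.coeFn_sub (S n) L), Lp.norm_def,
        ENNReal.ofReal_toReal (Lp.eLpNorm_ne_top _)]
    simp only [h1]
    have h2 : Tendsto (fun n => ‖S n - L‖) atTop (𝓝 0) := by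
      rw [← tendsto_iff_norm_sub_tendsto_zero]
      exact hSL
    have := (ENNReal.continuous_ofReal.tendsto 0).comp h2
    simpa [Function.comp_def] using this
  obtain ⟨ns, hns_mono, hns_ae⟩ := hmeas.exists_seq_tendsto_ae
  have hall : ∀ᵐ x ∂μ, ∀ n : ℕ, (S n : X → ℝ) x = ∑ i ∈ u n, c i * ε i x :=
    ae_all_iff.2 fun n => hScoe (u n)
  filter_upwards [hns_ae, hall] with x hx1 hx2
  have hpt : Tendsto (fun n => ∑ i ∈ u n, c i * ε i x) atTop (𝓝 (f x)) := (hf x).comp hu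
  have hpt2 : Tendsto (fun k => (S (ns k) : X → ℝ) x) atTop (𝓝 (f x)) := by
    have := hpt.comp hns_mono.tendsto_atTop
    refine this.congr fun k => ?_
    exact (hx2 (ns k)).symm
  exact tendsto_nhds_unique hx1 hpt2

open MeasureTheory Filter Topology

-- helper 1: product of square-summables
theorem aux_summable_mul {I : Type*} {u v : I → ℝ} (hu : Summable fun i => u i ^ 2)
    (hv : Summable fun i => v i ^ 2) : Summable fun i => u i * v i := by
  refine Summable.of_abs (Summable.of_nonneg_of_le (fun i => abs_nonneg _) (fun i => ?_)
    (((hu.add hv).mul_left (1 / 2))))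
  have h := two_mul_le_add_sq (|u i|) (|v i|)
  rw [abs_mul]
  simp only [sq_abs] at h
  nlinarith [abs_nonneg (u i), abs_nonneg (v i)]

-- helper 2: Memℓp 2 criterion for real sequences
theorem aux_memℓp_two_iff {I : Type*} (f : I → ℝ) :
    Memℓp f 2 ↔ Summable fun i => f i ^ 2 := by
  rw [memℓp_gen_iff (p := 2) (by norm_num)]
  constructor <;> intro h <;> refine h.congr fun i => ?_
  · rw [ENNReal.toReal_ofNat, Real.rpow_two, Real.norm_eq_abs, sq_abs]
  · rw [ENNReal.toReal_ofNat, Real.rpow_two, Real.norm_eq_abs, sq_abs]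



/-- Schmidt ellipsoid: given an orthonormal basis `(eᵢ)` of `L²(X,μ)` (with
pointwise defined representatives `ε i`), `I` countable, and square-summable
weights `(αᵢ)`, the kernel `K(x,y) = ∑ᵢ αᵢ² εᵢ(x) εᵢ(y)` is positive
semidefinite, and the closed unit ball of the associated RKHS is the Schmidt
ellipsoid `{f = ∑ᵢ fᵢ eᵢ : ∑ᵢ (fᵢ/αᵢ)² ≤ 1}` (with `fᵢ = 0` whenever
`αᵢ = 0`). -/
theorem stmt_9 {X : Type} [MeasurableSpace X] (μ : MeasureTheory.Measure X)
    {I : Type} [Countable I] (b : HilbertBasis I ℝ (MeasureTheory.Lp ℝ 2 μ))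
    (ε : I → X → ℝ) (hε : ∀ i : I, (b i : MeasureTheory.Lp ℝ 2 μ) =ᵐ[μ] ε i)
    (α : I → ℝ) (hα : Summable fun i : I => α i ^ 2)
    (K : X → X → ℝ) (hKsum : ∀ x y : X, Summable fun i : I => α i ^ 2 * ε i x * ε i y)
    (hK : ∀ x y : X, K x y = ∑' i : I, α i ^ 2 * ε i x * ε i y) :
    (∀ (n : ℕ) (x : Fin n → X) (c : Fin n → ℝ),
        0 ≤ ∑ i, ∑ j, c i * c j * K (x i) (x j)) ∧
      ∃ R : RKHSOn X K, ∀ g : R.H,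
        (‖g‖ ≤ 1 ↔ ∃ c : I → ℝ,
          (∀ i : I, α i = 0 → c i = 0) ∧
          (Summable fun i : I => (c i / α i) ^ 2) ∧
          (∑' i : I, (c i / α i) ^ 2) ≤ 1 ∧
          ∀ x : X, R.e g x = ∑' i : I, c i * ε i x) := by
  classical
  -- positivity
  have hpos : ∀ (n : ℕ) (x : Fin n → X) (c : Fin n → ℝ),
      0 ≤ ∑ i, ∑ j, c i * c j * K (x i) (x j) := by
    intro n x c
    have hterm : ∀ i j : Fin n, HasSum
        (fun m : I => (α m * c i * ε m (x i)) * (α m * c j * ε m (x j)))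
        (c i * c j * K (x i) (x j)) := by
      intro i j
      have heq : (fun m : I => c i * c j * (α m ^ 2 * ε m (x i) * ε m (x j)))
          = fun m : I => (α m * c i * ε m (x i)) * (α m * c j * ε m (x j)) := by
        funext m; ring
      rw [hK (x i) (x j), ← heq]
      exact (hKsum (x i) (x j)).hasSum.mul_left _
    have hdouble : HasSum
        (fun m : I => ∑ i, ∑ j, (α m * c i * ε m (x i)) * (α m * c j * ε m (x j)))
        (∑ i, ∑ j, c i * c j * K (x i) (x j)) :=
      hasSum_sum fun i _ => hasSum_sum fun j _ => hterm i j
    refine hasSum_le (fun m => ?_) hasSum_zero hdouble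
    have hsq' : ∑ i, ∑ j, (α m * c i * ε m (x i)) * (α m * c j * ε m (x j))
        = (∑ i, α m * c i * ε m (x i)) ^ 2 := by
      rw [sq, Finset.sum_mul_sum]
    rw [hsq']; positivity
  -- setup
  have hsq : ∀ x : X, Summable fun i : I => (α i * ε i x) ^ 2 := fun x =>
    (hKsum x x).congr fun i => by ring
  set Js : Set I := {i : I | α i ≠ 0} with hJsdef
  have hmemk : ∀ x : X, Memℓp (fun j : Js => α j.1 * ε j.1 x) 2 := fun x =>
    (aux_memℓp_two_iff _).2 ((hsq x).subtype Js)
  let k : X → lp (fun _ : Js => ℝ) 2 := fun x => ⟨fun j => α j.1 * ε j.1 x, hmemk x⟩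
  let E : lp (fun _ : Js => ℝ) 2 →ₗ[ℝ] X → ℝ :=
    { toFun := fun g x => inner ℝ (k x) g
      map_add' := fun g h => funext fun x => inner_add_right _ _ _
      map_smul' := fun r g => funext fun x => by
        simpa using real_inner_smul_right (k x) g r }
  have hEsum : ∀ (g : lp (fun _ : Js => ℝ) 2) (x : X),
      HasSum (fun j : Js => α j.1 * g j * ε j.1 x) (E g x) := by
    intro g x
    have h := lp.hasSum_inner (𝕜 := ℝ) (k x) g
    have heq : (fun j : Js => (inner ℝ ((k x) j) (g j) : ℝ))
        = fun j : Js => α j.1 * g j * ε j.1 x := by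
      funext j
      simp only [RCLike.inner_apply, conj_trivial]
      show g j * (α j.1 * ε j.1 x) = _
      ring
    rw [heq] at h
    exact h
  let cext : lp (fun _ : Js => ℝ) 2 → I → ℝ := fun g i =>
    if h : α i = 0 then 0 else α i * g ⟨i, h⟩
  have hcext_mem : ∀ g, Memℓp (cext g) 2 := by
    intro g
    rw [aux_memℓp_two_iff]
    refine Summable.of_nonneg_of_le (fun i => sq_nonneg _) (fun i => ?_) (hα.mul_left (‖g‖ ^ 2))
    by_cases h : α i = 0
    · have h0 : cext g i = 0 := dif_pos h
      rw [h0]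
      simpa using mul_nonneg (sq_nonneg ‖g‖) (sq_nonneg (α i))
    · have h0 : cext g i = α i * g ⟨i, h⟩ := dif_neg h
      rw [h0]
      have hb := lp.norm_apply_le_norm (by norm_num : (2 : ENNReal) ≠ 0) g ⟨i, h⟩
      have hb2 : (g ⟨i, h⟩) ^ 2 ≤ ‖g‖ ^ 2 := by
        rw [← sq_abs, ← Real.norm_eq_abs]
        exact pow_le_pow_left₀ (norm_nonneg _) hb 2
      nlinarith [sq_nonneg (α i), sq_nonneg (g ⟨i, h⟩)]
  have hcext_hasSum : ∀ g x, HasSum (fun i : I => cext g i * ε i x) (E g x) := by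
    intro g x
    have hsupp : Function.support (fun i : I => cext g i * ε i x) ⊆ Js := by
      intro i hi
      by_contra h
      simp only [hJsdef, Set.mem_setOf_eq, not_not] at h
      apply hi
      show cext g i * ε i x = 0
      rw [show cext g i = 0 from dif_pos h, zero_mul]
    rw [← hasSum_subtype_iff_of_support_subset hsupp]
    have heq : ((fun i : I => cext g i * ε i x) ∘ ((↑) : Js → I))
        = fun j : Js => α j.1 * g j * ε j.1 x := by
      funext j
      show cext g j.1 * ε j.1 x = α j.1 * g j * ε j.1 x
      rw [show cext g j.1 = α j.1 * g j from dif_neg j.2]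
    rw [heq]
    exact hEsum g x
  have hae : ∀ g, ((b.repr.symm ⟨cext g, hcext_mem g⟩ : Lp ℝ 2 μ) : X → ℝ) =ᵐ[μ] E g := fun g =>
    aux_ae_eq μ b ε hε ⟨cext g, hcext_mem g⟩ (E g) (fun x => hcext_hasSum g x)
  have hker : ∀ g, E g = 0 → g = 0 := by
    intro g hg
    have h1 : ((b.repr.symm ⟨cext g, hcext_mem g⟩ : Lp ℝ 2 μ) : X → ℝ) =ᵐ[μ] (0 : X → ℝ) :=
      (hae g).trans (hg ▸ EventuallyEq.rfl)
    have h2 : (b.repr.symm ⟨cext g, hcext_mem g⟩ : Lp ℝ 2 μ) = 0 :=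
      Lp.eq_zero_iff_ae_eq_zero.2 h1
    have h3 : (⟨cext g, hcext_mem g⟩ : lp (fun _ : I => ℝ) 2) = 0 := by
      apply b.repr.symm.injective
      simpa using h2
    apply lp.ext
    funext j
    have h4 : cext g j.1 = 0 := by
      have := congrArg (fun v : lp (fun _ : I => ℝ) 2 => (v : I → ℝ) j.1) h3
      simpa using this
    have h5 : α j.1 * g j = 0 := by
      rw [← show cext g j.1 = α j.1 * g j from dif_neg j.2, h4]
    exact (mul_eq_zero.mp h5).resolve_left j.2
  have hinj : Function.Injective E := by
    intro g1 g2 h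
    have := hker (g1 - g2) (by rw [map_sub, h, sub_self])
    exact sub_eq_zero.mp this
  have hsuppK : ∀ x y : X, Function.support (fun i : I => α i ^ 2 * ε i x * ε i y) ⊆ Js := by
    intro x y i hi
    by_contra h
    simp only [hJsdef, Set.mem_setOf_eq, not_not] at h
    apply hi
    simp [h]
  have hrepr : ∀ x : X, E (k x) = K x ∧ ∀ f, E f x = inner ℝ (k x) f := by
    intro x
    refine ⟨funext fun y => ?_, fun f => rfl⟩
    have h1 : E (k x) y = ∑' j : Js, α j.1 * (k x) j * ε j.1 y := (hEsum (k x) y).tsum_eq.symm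
    rw [h1, hK x y, ← tsum_subtype_eq_of_support_subset (hsuppK x y)]
    refine tsum_congr fun j => ?_
    show α j.1 * (α j.1 * ε j.1 x) * ε j.1 y = α j.1 ^ 2 * ε j.1 x * ε j.1 y
    ring
  refine ⟨hpos, ⟨{ H := lp (fun _ : Js => ℝ) 2
                   e := E
                   inj := hinj
                   repr := fun x => ⟨k x, hrepr x⟩ }, ?_⟩⟩
  intro g
  have hg2 : HasSum (fun j : Js => (g j) ^ 2) (‖g‖ ^ 2) := by
    have h := lp.hasSum_inner (𝕜 := ℝ) g g
    have heq : (fun j : Js => (inner ℝ (g j) (g j) : ℝ)) = fun j : Js => (g j) ^ 2 := by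
      funext j; simp [RCLike.inner_apply, sq]
    rw [heq] at h
    rwa [real_inner_self_eq_norm_sq] at h
  constructor
  · intro hg
    have hsupp2 : Function.support (fun i : I => (cext g i / α i) ^ 2) ⊆ Js := by
      intro i hi
      by_contra h
      simp only [hJsdef, Set.mem_setOf_eq, not_not] at h
      apply hi
      show (cext g i / α i) ^ 2 = 0
      rw [show cext g i = 0 from dif_pos h]
      simp
    have hext : HasSum (fun i : I => (cext g i / α i) ^ 2) (‖g‖ ^ 2) := by
      rw [← hasSum_subtype_iff_of_support_subset hsupp2]
      have heq : ((fun i : I => (cext g i / α i) ^ 2) ∘ ((↑) : Js → I))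
          = fun j : Js => (g j) ^ 2 := by
        funext j
        have hj : α j.1 ≠ 0 := j.2
        show (cext g j.1 / α j.1) ^ 2 = (g j) ^ 2
        rw [show cext g j.1 = α j.1 * g j from dif_neg hj, mul_div_cancel_left₀ _ hj]
      rw [heq]
      exact hg2
    refine ⟨cext g, fun i h => dif_pos h, hext.summable, ?_, fun x => (hcext_hasSum g x).tsum_eq.symm⟩
    rw [hext.tsum_eq]
    exact pow_le_one₀ (norm_nonneg g) hg
  · rintro ⟨c, hc0, hcs, hc1, hcr⟩
    have hterm_le : ∀ i, (c i / α i) ^ 2 ≤ 1 := fun i =>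
      le_trans (hcs.le_tsum i fun _ _ => sq_nonneg _) hc1
    have hmemc : Memℓp c 2 := by
      rw [aux_memℓp_two_iff]
      refine Summable.of_nonneg_of_le (fun i => sq_nonneg _) (fun i => ?_) hα
      by_cases h : α i = 0
      · simpa [hc0 i h] using sq_nonneg (α i)
      · have hci : c i = (c i / α i) * α i := (div_mul_cancel₀ _ h).symm
        rw [hci]
        nlinarith [sq_nonneg (α i), hterm_le i, sq_nonneg (c i / α i)]
    have hsum_c : ∀ x, HasSum (fun i : I => c i * ε i x) (E g x) := by
      intro x
      have hsummable : Summable (fun i : I => c i * ε i x) := by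
        have h1 : Summable (fun i : I => (c i / α i) * (α i * ε i x)) :=
          aux_summable_mul hcs (hsq x)
        refine h1.congr fun i => ?_
        by_cases h : α i = 0
        · simp [h, hc0 i h]
        · field_simp
      rw [hsummable.hasSum_iff]
      exact (hcr x).symm
    have h1 : ((b.repr.symm ⟨c, hmemc⟩ : Lp ℝ 2 μ) : X → ℝ) =ᵐ[μ] E g :=
      aux_ae_eq μ b ε hε ⟨c, hmemc⟩ (E g) hsum_c
    have h2 : (b.repr.symm ⟨c, hmemc⟩ : Lp ℝ 2 μ) = b.repr.symm ⟨cext g, hcext_mem g⟩ := by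
      have hd : (b.repr.symm ⟨c, hmemc⟩ - b.repr.symm ⟨cext g, hcext_mem g⟩ : Lp ℝ 2 μ) = 0 := by
        rw [Lp.eq_zero_iff_ae_eq_zero]
        filter_upwards [Lp.coeFn_sub (b.repr.symm ⟨c, hmemc⟩)
          (b.repr.symm ⟨cext g, hcext_mem g⟩), h1, hae g] with y hy1 hy2 hy3
        simp only [hy1, Pi.sub_apply, hy2, hy3, sub_self, Pi.zero_apply]
      exact sub_eq_zero.mp hd
    have h3 : (⟨c, hmemc⟩ : lp (fun _ : I => ℝ) 2) = ⟨cext g, hcext_mem g⟩ :=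
      b.repr.symm.injective h2
    have h4 : ∀ i, c i = cext g i := fun i => by
      have := congrArg (fun v : lp (fun _ : I => ℝ) 2 => (v : I → ℝ) i) h3
      simpa using this
    have hgj : ∀ j : Js, (g j) ^ 2 = (c j.1 / α j.1) ^ 2 := by
      intro j
      have hj : α j.1 ≠ 0 := j.2
      have hcj : c j.1 = α j.1 * g j := by
        rw [h4 j.1]; exact dif_neg hj
      rw [hcj, mul_div_cancel_left₀ _ hj]
    have hsupp3 : Function.support (fun i : I => (c i / α i) ^ 2) ⊆ Js := by
      intro i hi
      by_contra h
      simp only [hJsdef, Set.mem_setOf_eq, not_not] at h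
      apply hi
      simp [hc0 i h]
    have hfin : ‖g‖ ^ 2 ≤ 1 := by
      rw [← hg2.tsum_eq]
      calc ∑' j : Js, (g j) ^ 2 = ∑' j : Js, (c j.1 / α j.1) ^ 2 := tsum_congr hgj
        _ = ∑' i : I, (c i / α i) ^ 2 := tsum_subtype_eq_of_support_subset hsupp3
        _ ≤ 1 := hc1
    exact (pow_le_one_iff_of_nonneg (norm_nonneg g) two_ne_zero).mp hfin
end

section
/- Let H be a reproducing kernel Hilbert space on X with kernel K, and consider minimizing J(f) = C(f(x₁),…,f(x_n)) + ‖f‖_H² over f ∈ H, where C : ℝⁿ → ℝ is arbitrary and x₁,…,x_n ∈ X. If f* is a minimizer, then f* lies in the span of {K(x₁,·),…,K(x_n,·)}; equivalently, for any f ∈ H, writing f = f₁ + f₂ with f₁ the orthogonal projection onto span{K(x_i,·)}, one has J(f₁) ≤ J(f). -/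
/-- Representer theorem in a RKHS: when minimizing
`J(f) = C(f(x₁),…,f(xₙ)) + ‖f‖²` over a RKHS `H`, replacing `f` by its
orthogonal projection `f₁` onto `span{K(xᵢ,·)}` leaves the data term
unchanged and does not increase the norm, so `J(f₁) ≤ J(f)`; consequently any
minimizer lies in `span{K(x₁,·),…,K(xₙ,·)}`. -/
theorem stmt_17 {X H : Type*} [NormedAddCommGroup H] [InnerProductSpace ℝ H]
    [CompleteSpace H] (e : H →ₗ[ℝ] X → ℝ) (he : Function.Injective e)
    (Kx : X → H) (hKx : ∀ (x : X) (f : H), e f x = inner ℝ (Kx x) f)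
    (n : ℕ) (x : Fin n → X) (C : (Fin n → ℝ) → ℝ) :
    (∀ f : H, ∃ f₁ ∈ Submodule.span ℝ (Set.range fun i : Fin n => Kx (x i)),
      (∀ i : Fin n, e f₁ (x i) = e f (x i)) ∧
        C (fun i => e f₁ (x i)) + ‖f₁‖ ^ 2 ≤ C (fun i => e f (x i)) + ‖f‖ ^ 2) ∧
    ∀ fstar : H,
      (∀ f : H, C (fun i => e fstar (x i)) + ‖fstar‖ ^ 2 ≤
          C (fun i => e f (x i)) + ‖f‖ ^ 2) →
      fstar ∈ Submodule.span ℝ (Set.range fun i : Fin n => Kx (x i)) := by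
  set V : Submodule ℝ H := Submodule.span ℝ (Set.range fun i : Fin n => Kx (x i)) with hV
  haveI : FiniteDimensional ℝ V := FiniteDimensional.span_of_finite ℝ (Set.finite_range _)
  -- key construction for any f
  have key : ∀ f : H, ∃ f₁ ∈ V, (∀ i : Fin n, e f₁ (x i) = e f (x i)) ∧
      ‖f‖ ^ 2 = ‖f₁‖ ^ 2 + ‖f - f₁‖ ^ 2 := by
    intro f
    set f₁ : H := (V.orthogonalProjectionOnto f : H) with hf₁
    have hmem : f₁ ∈ V := (V.orthogonalProjectionOnto f).2
    have hperp : f - f₁ ∈ Vᗮ := V.sub_starProjection_mem_orthogonal f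
    refine ⟨f₁, hmem, ?_, ?_⟩
    · intro i
      have hK : Kx (x i) ∈ V := Submodule.subset_span ⟨i, rfl⟩
      have h0 : (inner ℝ (Kx (x i)) (f - f₁) : ℝ) = 0 :=
        (Submodule.mem_orthogonal V _).mp hperp _ hK
      rw [inner_sub_right] at h0
      rw [hKx, hKx]
      linarith
    · have h0 : (inner ℝ f₁ (f - f₁) : ℝ) = 0 := by
        exact (Submodule.mem_orthogonal V _).mp hperp _ hmem
      have : f = f₁ + (f - f₁) := by abel
      calc ‖f‖ ^ 2 = ‖f₁ + (f - f₁)‖ ^ 2 := by rw [← this]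
        _ = ‖f₁‖ ^ 2 + 2 * inner ℝ f₁ (f - f₁) + ‖f - f₁‖ ^ 2 := norm_add_sq_real _ _
        _ = ‖f₁‖ ^ 2 + ‖f - f₁‖ ^ 2 := by rw [h0]; ring
  constructor
  · intro f
    obtain ⟨f₁, hmem, heq, hnorm⟩ := key f
    refine ⟨f₁, hmem, heq, ?_⟩
    have : (fun i => e f₁ (x i)) = fun i => e f (x i) := funext heq
    rw [this]
    nlinarith [sq_nonneg ‖f - f₁‖]
  · intro fstar hmin
    obtain ⟨f₁, hmem, heq, hnorm⟩ := key fstar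
    have hdata : (fun i => e f₁ (x i)) = fun i => e fstar (x i) := funext heq
    have h1 := hmin f₁
    rw [hdata] at h1
    have : ‖fstar - f₁‖ ^ 2 = 0 := by nlinarith
    have : fstar - f₁ = 0 := by
      have := pow_eq_zero_iff (n := 2) (by norm_num) |>.mp this
      exact norm_eq_zero.mp this
    have : fstar = f₁ := by
      have := sub_eq_zero.mp this
      exact this
    rw [this]
    exact hmem
end
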